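/- If G is a nondegenerate gyrogroup (a gyrogroup possessing a nonidentity gyroautomorphism), then for each point p ∈ G there exists a nonidentity transformation T ∈ Γ_m with T(p) = p. -/

import Mathlib

/-- A gyrogroup: a set with a binary operation `op`, a left identity `e`, left inverses
`inv`, and gyroautomorphisms `gyr a b` (bijective and operation-preserving) satisfying the
left gyroassociative law and the left loop property. -/
class Gyrogroup (G : Type*) where
  /-- the gyrogroup operation `⊕` -/
  op : G → G → G
  /-- the identity element -/
  e : G
  /-- the inverse `⊖a` -/
  inv : G → G
  /-- (G1) `e ⊕ a = a` -/
  op_e : ∀ a : G, op e a = a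
  /-- (G2) `⊖a ⊕ a = e` -/
  op_inv : ∀ a : G, op (inv a) a = e
  /-- the gyroautomorphism `gyr[a, b]` -/
  gyr : G → G → G → G
  /-- (G3) `gyr[a, b]` is bijective -/
  gyr_bijective : ∀ a b : G, Function.Bijective (gyr a b)
  /-- (G3) `gyr[a, b]` preserves the operation -/
  gyr_op : ∀ a b x y : G, gyr a b (op x y) = op (gyr a b x) (gyr a b y)
  /-- (G3) the left gyroassociative law -/
  gyrassoc : ∀ a b c : G, op a (op b c) = op (op a b) (gyr a b c)
  /-- (G4) the left loop property -/
  loop : ∀ a b : G, gyr (op a b) b = gyr a b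

namespace Gyrogroup

variable {G : Type*} [Gyrogroup G]

theorem key (x z : G) : op (inv x) (op x z) = gyr (inv x) x z := by
  rw [gyrassoc, op_inv, op_e]

theorem L_injective (x : G) : Function.Injective (op x) := by
  intro z₁ z₂ h
  have h1 : gyr (inv x) x z₁ = gyr (inv x) x z₂ := by
    rw [← key, ← key, h]
  exact (gyr_bijective (inv x) x).1 h1

theorem L_surjective (x : G) : Function.Surjective (op x) := by
  intro w
  obtain ⟨z, hz⟩ := (gyr_bijective (inv x) x).2 (op (inv x) w)
  exact ⟨z, L_injective (inv x) (by rw [key, hz])⟩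

theorem L_bijective (x : G) : Function.Bijective (op x) :=
  ⟨L_injective x, L_surjective x⟩

/-- The left gyrotranslation `L_a : x ↦ a ⊕ x` as a permutation of `G`. -/
noncomputable def Lperm (a : G) : Equiv.Perm G := Equiv.ofBijective (op a) (L_bijective a)

/-- The gyroautomorphism `gyr[a, b]` as a permutation of `G`. -/
noncomputable def gyrPerm (a b : G) : Equiv.Perm G := Equiv.ofBijective (gyr a b) (gyr_bijective a b)

/-- `GYR(G)`: the subgroup of `Sym(G)` generated by all gyroautomorphisms. -/
def GYR (G : Type*) [Gyrogroup G] : Subgroup (Equiv.Perm G) :=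
  Subgroup.closure {π : Equiv.Perm G | ∃ a b : G, π = gyrPerm a b}

/-- `Γₘ = {L_a ∘ γ : a ∈ G, γ ∈ GYR(G)}`, a subgroup of `Sym(G)`. -/
def Γm (G : Type*) [Gyrogroup G] : Set (Equiv.Perm G) :=
  {T : Equiv.Perm G | ∃ a : G, ∃ γ ∈ GYR G, T = Lperm a * γ}

theorem gyr_e_left (b c : G) : gyr e b c = c := by
  have h := gyrassoc e b c
  rw [op_e, op_e] at h
  exact (L_injective b h).symm

theorem gyr_inv_self (b c : G) : gyr (inv b) b c = c := by
  have h := loop (inv b) b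
  rw [op_inv] at h
  rw [← h, gyr_e_left]

theorem left_cancel (x z : G) : op (inv x) (op x z) = z := by
  rw [key, gyr_inv_self]

theorem op_e_right (a : G) : op a e = a := by
  apply L_injective (inv a)
  rw [left_cancel, op_inv]

theorem idem_eq_e {u : G} (h : op u u = u) : u = e := by
  have h1 : op (inv u) (op u u) = u := left_cancel u u
  rw [h, op_inv] at h1
  exact h1.symm

theorem Lperm_apply (a x : G) : Lperm a x = op a x := rfl

theorem gyrPerm_apply (a b x : G) : gyrPerm a b x = gyr a b x := rfl

/-- Every element of `GYR G` preserves the gyrogroup operation. -/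
theorem GYR_preserves_op {δ : Equiv.Perm G} (hδ : δ ∈ GYR G) :
    ∀ x y : G, δ (op x y) = op (δ x) (δ y) := by
  refine Subgroup.closure_induction ?_ ?_ ?_ ?_ hδ
  · rintro π ⟨a, b, rfl⟩ x y
    exact gyr_op a b x y
  · intro x y; rfl
  · intro π σ _ _ hπ hσ x y
    simp only [Equiv.Perm.mul_apply, hσ, hπ]
  · intro π _ hπ x y
    apply π.injective
    rw [hπ]
    simp only [Equiv.Perm.inv_def, Equiv.apply_symm_apply]

theorem GYR_fixes_e {δ : Equiv.Perm G} (hδ : δ ∈ GYR G) : δ e = e := by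
  apply idem_eq_e
  rw [← GYR_preserves_op hδ, op_e]

theorem Lperm_inv (a : G) : (Lperm a)⁻¹ = Lperm (inv a) := by
  rw [eq_comm, eq_inv_iff_mul_eq_one]
  ext z
  exact left_cancel a z

theorem Lperm_mul (a b : G) : Lperm a * Lperm b = Lperm (op a b) * gyrPerm a b := by
  ext z
  exact gyrassoc a b z

theorem GYR_comm_Lperm {δ : Equiv.Perm G} (hδ : δ ∈ GYR G) (b : G) :
    δ * Lperm b = Lperm (δ b) * δ := by
  ext z
  exact GYR_preserves_op hδ b z

end Gyrogroup

open Gyrogroup in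
/-- If `G` is a nondegenerate gyrogroup (one possessing a nonidentity gyroautomorphism),
then every point of `G` is fixed by some nonidentity transformation in `Γₘ`. -/
theorem stmt10 {G : Type*} [Gyrogroup G] (hnd : ∃ a b : G, gyr a b ≠ id) (p : G) :
    ∃ T ∈ Γm G, T ≠ 1 ∧ T p = p := by
  obtain ⟨a, b, hab⟩ := hnd
  set δ : Equiv.Perm G := gyrPerm a b with hδdef
  have hδmem : δ ∈ GYR G := Subgroup.subset_closure ⟨a, b, rfl⟩
  have hδne : δ ≠ 1 := by
    intro h
    apply hab
    funext z
    have := congrArg (fun π : Equiv.Perm G => π z) h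
    simpa [hδdef, gyrPerm_apply] using this
  refine ⟨Lperm p * δ * (Lperm p)⁻¹, ?_, ?_, ?_⟩
  · rw [Lperm_inv, mul_assoc, GYR_comm_Lperm hδmem, ← mul_assoc, Lperm_mul, mul_assoc]
    exact ⟨op p (δ (inv p)), gyrPerm p (δ (inv p)) * δ,
      mul_mem (Subgroup.subset_closure ⟨p, δ (inv p), rfl⟩) hδmem, rfl⟩
  · intro h
    rw [mul_inv_eq_one] at h
    exact hδne (mul_left_cancel (h.trans (mul_one (Lperm p)).symm))
  · rw [Lperm_inv]
    show op p (δ (op (inv p) p)) = p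
    rw [op_inv, GYR_fixes_e hδmem, op_e_right]
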